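/- Let n ≥ 2 be even, t > 0, C > 0 and β := (t/(2n))^{1/4}. Suppose the environment Ξ′ satisfies Z_n^{Ξ′}(β) ≥ √(2/(nπ)) · 𝔼Z_n(β) and Overlap_{Ξ′}(β) ≤ C√n. Then for every environment Ξ, (πt/2)^{−1/4} · ( log √(nπ/2) + log( Z_n^{Ξ}(β) / 𝔼Z_n(β) ) ) ≥ −C^{1/2} π^{−1/4} d_n(Ξ, Ξ′). -/

import Mathlib

noncomputable section

open Finset

/-- Position after `i` steps of the nearest-neighbour walk on `ℤ` started at `0`,
with step signs `ε` (a `+1` step when `ε j = true`, a `−1` step otherwise). -/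
def walk (n : ℕ) (ε : Fin n → Bool) (i : ℕ) : ℤ :=
  ∑ j : Fin n, if (j : ℕ) < i then (if ε j then 1 else -1) else 0

/-- Energy `Σ_{i=1}^n Ξ(i, S_i)` of the path with step signs `ε` in the
environment `Ξ`. -/
def pathEnergy (n : ℕ) (Ξ : ℕ × ℤ → ℝ) (ε : Fin n → Bool) : ℝ :=
  ∑ i ∈ Finset.Icc 1 n, Ξ (i, walk n ε i)

/-- Point-to-point polymer partition function
`Z_n^Ξ(β) = E_S[exp(β Σ_{i=1}^n Ξ(i,S_i)) 1_{S_n = 0}]`, where `E_S` is the uniform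
average over the `2^n` nearest-neighbour paths from `0`. -/
def Zn (n : ℕ) (β : ℝ) (Ξ : ℕ × ℤ → ℝ) : ℝ :=
  ((2 : ℝ) ^ n)⁻¹ * ∑ ε : Fin n → Bool,
    if walk n ε n = 0 then Real.exp (β * pathEnergy n Ξ ε) else 0

/-- Distance `d_n(Ξ,Ξ')` between two environments:
`d_n(Ξ,Ξ')² = Σ_{i=1}^n Σ_{|x| ≤ i} (Ξ(i,x) − Ξ'(i,x))²`. -/
def dEnv (n : ℕ) (Ξ Ξ' : ℕ × ℤ → ℝ) : ℝ :=
  Real.sqrt (∑ i ∈ Finset.Icc 1 n, ∑ x ∈ Finset.Icc (-(i : ℤ)) (i : ℤ),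
    (Ξ (i, x) - Ξ' (i, x)) ^ 2)

/-- `L_n = Σ_{i=1}^n 1_{S_i¹ = S_i²}`, the number of coincidences of the two paths. -/
def overlapCount (n : ℕ) (ε₁ ε₂ : Fin n → Bool) : ℕ :=
  ((Finset.Icc 1 n).filter fun i => walk n ε₁ i = walk n ε₂ i).card

/-- `E_{S¹,S²}[L_n · exp(β Σ_{i=1}^n (Ξ(i,S_i¹) + Ξ(i,S_i²))) · 1_{S_n¹ = S_n² = 0}]`,
the joint expectation over two independent `n`-step simple random walks. -/
def replicaAvg (n : ℕ) (β : ℝ) (Ξ : ℕ × ℤ → ℝ) : ℝ :=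
  ((2 : ℝ) ^ n * (2 : ℝ) ^ n)⁻¹ * ∑ ε₁ : Fin n → Bool, ∑ ε₂ : Fin n → Bool,
    if walk n ε₁ n = 0 ∧ walk n ε₂ n = 0 then
      (overlapCount n ε₁ ε₂ : ℝ) * Real.exp (β * (pathEnergy n Ξ ε₁ + pathEnergy n Ξ ε₂))
    else 0

/-- The replica overlap `Overlap_Ξ(β)`. -/
def Overlap (n : ℕ) (β : ℝ) (Ξ : ℕ × ℤ → ℝ) : ℝ :=
  replicaAvg n β Ξ / (Zn n β Ξ) ^ 2

open MeasureTheory ProbabilityTheory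

/-- A family `Ξr : Ω → (ℕ × ℤ → ℝ)` is an i.i.d. standard Gaussian random environment
if its coordinates are measurable, independent, and each has the standard Gaussian law. -/
def IsIIDGaussianEnv {Ω : Type*} [MeasurableSpace Ω] (P : Measure Ω)
    (Ξr : Ω → ℕ × ℤ → ℝ) : Prop :=
  (∀ p : ℕ × ℤ, Measurable fun ω => Ξr ω p) ∧
  iIndepFun (fun p ω => Ξr ω p) P ∧
  ∀ p : ℕ × ℤ, Measure.map (fun ω => Ξr ω p) P = gaussianReal 0 1

section AuxLemmas

lemma walk_mem_Icc (n : ℕ) (ε : Fin n → Bool) (i : ℕ) :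
    walk n ε i ∈ Finset.Icc (-(i : ℤ)) (i : ℤ) := by
  have h1 : |walk n ε i| ≤ ∑ j : Fin n, (if (j : ℕ) < i then (1:ℤ) else 0) := by
    refine (Finset.abs_sum_le_sum_abs _ _).trans (Finset.sum_le_sum fun j _ => ?_)
    split
    · split <;> simp
    · simp
  have h2 : ∑ j : Fin n, (if (j : ℕ) < i then (1:ℤ) else 0) ≤ (i : ℤ) := by
    rw [Finset.sum_boole]
    have hc : (Finset.univ.filter fun j : Fin n => (j : ℕ) < i).card ≤ i := by
      have := Finset.card_le_card_of_injOn
        (f := fun j : Fin n => (j : ℕ)) (s := Finset.univ.filter fun j : Fin n => (j : ℕ) < i)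
        (t := Finset.range i)
        (fun j hj => by simp at hj ⊢; exact hj)
        (fun a _ b _ h => Fin.val_injective h)
      simpa using this
    exact_mod_cast hc
  have := abs_le.mp (h1.trans h2)
  simp [Finset.mem_Icc, this.1, this.2]

lemma sum_alt (k : ℕ) :
    ∑ j ∈ Finset.range (k + k), (if j % 2 = 0 then (1:ℤ) else -1) = 0 := by
  induction k with
  | zero => simp
  | succ m ih =>
    have h : m + 1 + (m + 1) = (m + m) + 1 + 1 := by omega
    rw [h, Finset.sum_range_succ, Finset.sum_range_succ, ih]
    rw [if_pos (by omega : (m + m) % 2 = 0), if_neg (by omega : ¬ (m + m + 1) % 2 = 0)]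
    ring

lemma exists_return (n : ℕ) (hne : Even n) : ∃ ε : Fin n → Bool, walk n ε n = 0 := by
  obtain ⟨k, hk⟩ := hne
  refine ⟨fun j => decide ((j : ℕ) % 2 = 0), ?_⟩
  have h1 : walk n (fun j => decide ((j : ℕ) % 2 = 0)) n
      = ∑ j ∈ Finset.range n, (fun j : ℕ => if j < n then (if j % 2 = 0 then (1:ℤ) else -1) else 0) j := by
    rw [walk, ← Fin.sum_univ_eq_sum_range]
    refine Finset.sum_congr rfl fun j _ => ?_
    by_cases hj : (j : ℕ) % 2 = 0 <;> simp [hj]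
  rw [h1, Finset.sum_congr rfl (fun j hj => if_pos (Finset.mem_range.mp hj)), hk]
  exact sum_alt k

lemma ind_split (s : Finset ℤ) (a b : ℤ) (ha : a ∈ s) :
    (if a = b then (1:ℝ) else 0) =
      ∑ x ∈ s, (if a = x then (1:ℝ) else 0) * (if b = x then 1 else 0) := by
  rcases eq_or_ne a b with h | h
  · subst h
    rw [if_pos rfl]
    rw [Finset.sum_congr rfl (fun x _ => ?_), Finset.sum_ite_eq s a (fun _ => (1:ℝ)), if_pos ha]
    split <;> simp_all
  · rw [if_neg h]
    refine (Finset.sum_eq_zero fun x _ => ?_).symm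
    rcases eq_or_ne a x with h1 | h1
    · subst h1; rw [if_pos rfl, one_mul, if_neg (fun hbx => h hbx.symm)]
    · rw [if_neg h1, zero_mul]


lemma Zn_nonneg' (n : ℕ) (β : ℝ) (Ξ : ℕ × ℤ → ℝ) : 0 ≤ Zn n β Ξ := by
  refine mul_nonneg (by positivity) (Finset.sum_nonneg fun ε _ => ?_)
  split
  · exact (Real.exp_pos _).le
  · exact le_refl 0

lemma Zn_pos' (n : ℕ) (hne : Even n) (β : ℝ) (Ξ : ℕ × ℤ → ℝ) : 0 < Zn n β Ξ := by
  obtain ⟨ε₀, hε₀⟩ := exists_return n hne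
  refine mul_pos (by positivity) (Finset.sum_pos' (fun ε _ => ?_) ⟨ε₀, Finset.mem_univ _, ?_⟩)
  · split
    · exact (Real.exp_pos _).le
    · exact le_refl 0
  · rw [if_pos hε₀]; exact Real.exp_pos _

end AuxLemmas

set_option maxHeartbeats 2000000 in
/-- Let `n ≥ 2` be even, `t > 0`, `C > 0` and `β = (t/(2n))^{1/4}`. If the environment
`Ξ'` satisfies `Z_n^{Ξ'}(β) ≥ √(2/(nπ)) 𝔼Z_n(β)` and `Overlap_{Ξ'}(β) ≤ C√n`, then for
every environment `Ξ`,
`(πt/2)^{−1/4} (log √(nπ/2) + log(Z_n^Ξ(β)/𝔼Z_n(β))) ≥ −C^{1/2} π^{−1/4} d_n(Ξ,Ξ')`. -/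
theorem polymer_lower_bound_of_good_env {Ω : Type*} [MeasurableSpace Ω] (P : Measure Ω)
    [IsProbabilityMeasure P] (Ξr : Ω → ℕ × ℤ → ℝ) (hiid : IsIIDGaussianEnv P Ξr)
    (n : ℕ) (hn : 2 ≤ n) (hne : Even n) (t C : ℝ) (ht : 0 < t) (hC : 0 < C)
    (β : ℝ) (hβ : β = (t / (2 * n)) ^ ((1 : ℝ) / 4))
    (EZ : ℝ) (hEZ : EZ = ∫ ω, Zn n β (Ξr ω) ∂P)
    (Ξ' : ℕ × ℤ → ℝ)
    (hZ' : Real.sqrt (2 / (n * Real.pi)) * EZ ≤ Zn n β Ξ')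
    (hov : Overlap n β Ξ' ≤ C * Real.sqrt n)
    (Ξ : ℕ × ℤ → ℝ) :
    -(C ^ ((1 : ℝ) / 2) * Real.pi ^ (-(1 : ℝ) / 4) * dEnv n Ξ Ξ')
      ≤ (Real.pi * t / 2) ^ (-(1 : ℝ) / 4) *
          (Real.log (Real.sqrt (n * Real.pi / 2)) + Real.log (Zn n β Ξ / EZ)) := by
  have hπ := Real.pi_pos
  have hπ3 := Real.pi_gt_three
  have hn0 : (0:ℝ) < n := by
    have h : 0 < n := by omega
    exact_mod_cast h
  have hn2 : (2:ℝ) ≤ n := by exact_mod_cast hn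
  have hd0 : 0 ≤ dEnv n Ξ Ξ' := Real.sqrt_nonneg _
  have ht2 : (0:ℝ) < Real.pi * t / 2 := by positivity
  have hKpos : (0:ℝ) < (Real.pi * t / 2) ^ (-(1:ℝ)/4) := Real.rpow_pos_of_pos ht2 _
  have hβ0 : 0 ≤ β := by rw [hβ]; positivity
  have hEZ0 : 0 ≤ EZ := by
    rw [hEZ]; exact integral_nonneg fun ω => Zn_nonneg' n β (Ξr ω)
  have hZpos : 0 < Zn n β Ξ := Zn_pos' n hne β Ξ
  have hsq1 : (1:ℝ) ≤ Real.sqrt ((n:ℝ) * Real.pi / 2) := by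
    rw [show (1:ℝ) = Real.sqrt 1 from Real.sqrt_one.symm]
    exact Real.sqrt_le_sqrt (by nlinarith)
  have hLHS : -(C ^ ((1:ℝ)/2) * Real.pi ^ (-(1:ℝ)/4) * dEnv n Ξ Ξ') ≤ 0 := by
    have h1 : (0:ℝ) ≤ C ^ ((1:ℝ)/2) := Real.rpow_nonneg hC.le _
    have h2 : (0:ℝ) ≤ Real.pi ^ (-(1:ℝ)/4) := Real.rpow_nonneg hπ.le _
    nlinarith [mul_nonneg (mul_nonneg h1 h2) hd0]
  rcases hEZ0.eq_or_lt with h0 | hEZpos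
  · rw [← h0, div_zero, Real.log_zero]
    refine hLHS.trans (mul_nonneg hKpos.le ?_)
    rw [add_zero]
    exact Real.log_nonneg hsq1
  -- main case : EZ > 0
  set w : (Fin n → Bool) → ℝ := fun ε =>
    if walk n ε n = 0 then Real.exp (β * pathEnergy n Ξ' ε) else 0 with hwdef
  have hw0 : ∀ ε, 0 ≤ w ε := fun ε => by
    simp only [hwdef]; split
    · exact (Real.exp_pos _).le
    · exact le_refl 0
  set W : ℝ := ∑ ε : Fin n → Bool, w ε with hWdef
  have hZ'W : Zn n β Ξ' = ((2:ℝ)^n)⁻¹ * W := by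
    rw [hWdef]; simp only [hwdef]; rfl
  have hZ'pos : 0 < Zn n β Ξ' :=
    lt_of_lt_of_le (mul_pos (Real.sqrt_pos.mpr (by positivity)) hEZpos) hZ'
  have hWpos : 0 < W := by
    have h2n : (0:ℝ) < (2:ℝ)^n := by positivity
    have h := mul_pos h2n hZ'pos
    rwa [hZ'W, ← mul_assoc, mul_inv_cancel₀ h2n.ne', one_mul] at h
  set p : (Fin n → Bool) → ℝ := fun ε => w ε / W with hpdef
  have hp0 : ∀ ε ∈ (Finset.univ : Finset (Fin n → Bool)), 0 ≤ p ε :=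
    fun ε _ => div_nonneg (hw0 ε) hWpos.le
  have hp1 : ∑ ε : Fin n → Bool, p ε = 1 := by
    simp only [hpdef]
    rw [← Finset.sum_div, ← hWdef, div_self hWpos.ne']
  set Δ : (Fin n → Bool) → ℝ := fun ε => pathEnergy n Ξ ε - pathEnergy n Ξ' ε with hΔdef
  set Q : ℝ := ∑ ε : Fin n → Bool, p ε * Real.exp (β * Δ ε) with hQdef
  have hZQ : Zn n β Ξ = Zn n β Ξ' * Q := by
    rw [hZ'W, mul_assoc, hQdef, Finset.mul_sum]
    show Zn n β Ξ = ((2:ℝ)^n)⁻¹ * ∑ ε : Fin n → Bool, W * (p ε * Real.exp (β * Δ ε))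
    rw [Zn]
    congr 1
    refine Finset.sum_congr rfl fun ε _ => ?_
    simp only [hpdef, hwdef, hΔdef]
    by_cases h : walk n ε n = 0
    · rw [if_pos h, if_pos h]
      have e1 : W * (Real.exp (β * pathEnergy n Ξ' ε) / W *
          Real.exp (β * (pathEnergy n Ξ ε - pathEnergy n Ξ' ε)))
          = Real.exp (β * pathEnergy n Ξ' ε +
              β * (pathEnergy n Ξ ε - pathEnergy n Ξ' ε)) := by
        rw [Real.exp_add]; field_simp
      rw [e1]; congr 1; ring
    · rw [if_neg h, if_neg h]; simp
  have hJ : Real.exp (∑ ε : Fin n → Bool, p ε * (β * Δ ε)) ≤ Q := by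
    have h := convexOn_exp.map_sum_le (p := fun ε => β * Δ ε) hp0 hp1
      (fun ε _ => Set.mem_univ _)
    simpa [smul_eq_mul, hQdef] using h
  have hQpos : 0 < Q := lt_of_lt_of_le (Real.exp_pos _) hJ
  have hsum_eq : β * ∑ ε : Fin n → Bool, p ε * Δ ε
      = ∑ ε : Fin n → Bool, p ε * (β * Δ ε) := by
    rw [Finset.mul_sum]
    exact Finset.sum_congr rfl fun ε _ => by ring
  have hlogQ : β * ∑ ε : Fin n → Bool, p ε * Δ ε ≤ Real.log Q := by
    rw [hsum_eq, ← Real.log_exp (∑ ε : Fin n → Bool, p ε * (β * Δ ε))]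
    exact Real.log_le_log (Real.exp_pos _) hJ
  -- the polymer measure marginals
  set μ : ℕ → ℤ → ℝ := fun i x =>
    ∑ ε : Fin n → Bool, p ε * (if walk n ε i = x then 1 else 0) with hμdef
  have hΔeq : ∀ ε, Δ ε = ∑ i ∈ Finset.Icc 1 n, ∑ x ∈ Finset.Icc (-(i:ℤ)) (i:ℤ),
      (if walk n ε i = x then (1:ℝ) else 0) * (Ξ (i, x) - Ξ' (i, x)) := by
    intro ε
    have h1 : Δ ε = ∑ i ∈ Finset.Icc 1 n, (Ξ (i, walk n ε i) - Ξ' (i, walk n ε i)) := by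
      simp only [hΔdef, pathEnergy, ← Finset.sum_sub_distrib]
    rw [h1]
    refine Finset.sum_congr rfl fun i _ => ?_
    have h2 : ∀ x ∈ Finset.Icc (-(i:ℤ)) (i:ℤ),
        (if walk n ε i = x then (1:ℝ) else 0) * (Ξ (i, x) - Ξ' (i, x))
          = (if walk n ε i = x then (Ξ (i, x) - Ξ' (i, x)) else 0) := by
      intro x _; split
      · rw [one_mul]
      · rw [zero_mul]
    rw [Finset.sum_congr rfl h2,
      Finset.sum_ite_eq _ (walk n ε i) (fun x => Ξ (i, x) - Ξ' (i, x)),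
      if_pos (walk_mem_Icc n ε i)]
  have hS : ∑ ε : Fin n → Bool, p ε * Δ ε
      = ∑ i ∈ Finset.Icc 1 n, ∑ x ∈ Finset.Icc (-(i:ℤ)) (i:ℤ),
          μ i x * (Ξ (i, x) - Ξ' (i, x)) := by
    have h1 : ∑ ε : Fin n → Bool, p ε * Δ ε
        = ∑ ε : Fin n → Bool, ∑ i ∈ Finset.Icc 1 n, ∑ x ∈ Finset.Icc (-(i:ℤ)) (i:ℤ),
            p ε * ((if walk n ε i = x then (1:ℝ) else 0) * (Ξ (i, x) - Ξ' (i, x))) := by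
      refine Finset.sum_congr rfl fun ε _ => ?_
      rw [hΔeq ε, Finset.mul_sum]
      exact Finset.sum_congr rfl fun i _ => Finset.mul_sum _ _ _
    rw [h1, Finset.sum_comm]
    refine Finset.sum_congr rfl fun i _ => ?_
    rw [Finset.sum_comm]
    refine Finset.sum_congr rfl fun x _ => ?_
    simp only [hμdef]
    rw [Finset.sum_mul]
    exact Finset.sum_congr rfl fun ε _ => by ring
  set A : ℝ := ∑ i ∈ Finset.Icc 1 n, ∑ x ∈ Finset.Icc (-(i:ℤ)) (i:ℤ), (μ i x)^2 with hAdef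
  have hA0 : 0 ≤ A :=
    Finset.sum_nonneg fun i _ => Finset.sum_nonneg fun x _ => sq_nonneg _
  -- the overlap identity
  have hν : ∀ (i : ℕ) (x : ℤ),
      (∑ ε : Fin n → Bool, w ε * (if walk n ε i = x then (1:ℝ) else 0)) = W * μ i x := by
    intro i x
    simp only [hμdef, Finset.mul_sum]
    refine Finset.sum_congr rfl fun ε _ => ?_
    simp only [hpdef]
    field_simp
  have hrep : replicaAvg n β Ξ' = ((2:ℝ)^n * (2:ℝ)^n)⁻¹ *
      ∑ ε₁ : Fin n → Bool, ∑ ε₂ : Fin n → Bool,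
        (overlapCount n ε₁ ε₂ : ℝ) * (w ε₁ * w ε₂) := by
    rw [replicaAvg]
    congr 1
    refine Finset.sum_congr rfl fun ε₁ _ => Finset.sum_congr rfl fun ε₂ _ => ?_
    simp only [hwdef]
    by_cases h : walk n ε₁ n = 0 ∧ walk n ε₂ n = 0
    · rw [if_pos h, if_pos h.1, if_pos h.2, ← Real.exp_add, mul_add]
    · rw [if_neg h]
      rcases not_and_or.mp h with h1 | h1
      · rw [if_neg h1]; ring
      · rw [if_neg h1]; ring
  have hoc : ∀ ε₁ ε₂ : Fin n → Bool, (overlapCount n ε₁ ε₂ : ℝ)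
      = ∑ i ∈ Finset.Icc 1 n, ∑ x ∈ Finset.Icc (-(i:ℤ)) (i:ℤ),
          (if walk n ε₁ i = x then (1:ℝ) else 0) * (if walk n ε₂ i = x then 1 else 0) := by
    intro ε₁ ε₂
    rw [overlapCount]
    rw [← Finset.sum_boole]
    exact Finset.sum_congr rfl fun i _ => ind_split _ _ _ (walk_mem_Icc n ε₁ i)
  have hsum2 : ∑ ε₁ : Fin n → Bool, ∑ ε₂ : Fin n → Bool,
      (overlapCount n ε₁ ε₂ : ℝ) * (w ε₁ * w ε₂)
      = ∑ i ∈ Finset.Icc 1 n, ∑ x ∈ Finset.Icc (-(i:ℤ)) (i:ℤ),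
          (∑ ε : Fin n → Bool, w ε * (if walk n ε i = x then (1:ℝ) else 0))^2 := by
    have h1 : ∀ ε₁ ε₂ : Fin n → Bool, (overlapCount n ε₁ ε₂ : ℝ) * (w ε₁ * w ε₂)
        = ∑ i ∈ Finset.Icc 1 n, ∑ x ∈ Finset.Icc (-(i:ℤ)) (i:ℤ),
            (w ε₁ * (if walk n ε₁ i = x then (1:ℝ) else 0)) *
              (w ε₂ * (if walk n ε₂ i = x then (1:ℝ) else 0)) := by
      intro ε₁ ε₂
      rw [hoc, Finset.sum_mul]
      refine Finset.sum_congr rfl fun i _ => ?_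
      rw [Finset.sum_mul]
      exact Finset.sum_congr rfl fun x _ => by ring
    rw [Finset.sum_congr rfl fun ε₁ _ => Finset.sum_congr rfl fun ε₂ _ => h1 ε₁ ε₂]
    rw [Finset.sum_congr rfl fun ε₁ (_ : ε₁ ∈ Finset.univ) => Finset.sum_comm]
    rw [Finset.sum_comm]
    refine Finset.sum_congr rfl fun i _ => ?_
    rw [Finset.sum_congr rfl fun ε₁ (_ : ε₁ ∈ Finset.univ) => Finset.sum_comm]
    rw [Finset.sum_comm]
    refine Finset.sum_congr rfl fun x _ => ?_
    rw [sq, Finset.sum_mul_sum]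
  have hWA : ∑ i ∈ Finset.Icc 1 n, ∑ x ∈ Finset.Icc (-(i:ℤ)) (i:ℤ), (W * μ i x)^2
      = W^2 * A := by
    rw [hAdef, Finset.mul_sum]
    refine Finset.sum_congr rfl fun i _ => ?_
    rw [Finset.mul_sum]
    exact Finset.sum_congr rfl fun x _ => by ring
  have hOv : Overlap n β Ξ' = A := by
    rw [Overlap, hrep, hsum2, hZ'W]
    rw [Finset.sum_congr rfl fun i (_ : i ∈ Finset.Icc 1 n) =>
      Finset.sum_congr rfl fun x _ => by rw [hν i x]]
    rw [hWA]
    have h2n : ((2:ℝ)^n) ≠ 0 := by positivity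
    field_simp
  -- Cauchy–Schwarz
  set T : Finset ((_ : ℕ) × ℤ) :=
    (Finset.Icc 1 n).sigma (fun i => Finset.Icc (-(i:ℤ)) (i:ℤ)) with hTdef
  have hST : ∑ ε : Fin n → Bool, p ε * Δ ε
      = ∑ q ∈ T, μ q.1 q.2 * (Ξ (q.1, q.2) - Ξ' (q.1, q.2)) := by
    rw [hS, hTdef, Finset.sum_sigma]
  have hAT : ∑ q ∈ T, (μ q.1 q.2)^2 = A := by
    rw [hAdef, hTdef, Finset.sum_sigma]
  have hdT : dEnv n Ξ Ξ' = Real.sqrt (∑ q ∈ T, (Ξ (q.1, q.2) - Ξ' (q.1, q.2))^2) := by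
    rw [dEnv, hTdef, Finset.sum_sigma]
  have hCS2 : (∑ q ∈ T, μ q.1 q.2 * (Ξ (q.1, q.2) - Ξ' (q.1, q.2)))^2
      ≤ (∑ q ∈ T, (μ q.1 q.2)^2) * (∑ q ∈ T, (Ξ (q.1, q.2) - Ξ' (q.1, q.2))^2) :=
    Finset.sum_mul_sq_le_sq_mul_sq T _ _
  have hCS3 : -(Real.sqrt A * dEnv n Ξ Ξ') ≤ ∑ ε : Fin n → Bool, p ε * Δ ε := by
    rw [hST]
    have h1 : |∑ q ∈ T, μ q.1 q.2 * (Ξ (q.1, q.2) - Ξ' (q.1, q.2))|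
        ≤ Real.sqrt A * dEnv n Ξ Ξ' := by
      rw [← Real.sqrt_sq_eq_abs]
      calc Real.sqrt ((∑ q ∈ T, μ q.1 q.2 * (Ξ (q.1, q.2) - Ξ' (q.1, q.2)))^2)
          ≤ Real.sqrt ((∑ q ∈ T, (μ q.1 q.2)^2) *
              (∑ q ∈ T, (Ξ (q.1, q.2) - Ξ' (q.1, q.2))^2)) := Real.sqrt_le_sqrt hCS2
        _ = Real.sqrt (∑ q ∈ T, (μ q.1 q.2)^2) *
              Real.sqrt (∑ q ∈ T, (Ξ (q.1, q.2) - Ξ' (q.1, q.2))^2) :=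
            Real.sqrt_mul (Finset.sum_nonneg fun q _ => sq_nonneg _) _
        _ = Real.sqrt A * dEnv n Ξ Ξ' := by rw [hAT, hdT]
    have h2 := neg_abs_le (∑ q ∈ T, μ q.1 q.2 * (Ξ (q.1, q.2) - Ξ' (q.1, q.2)))
    linarith
  -- bound √A
  have hAbound : Real.sqrt A ≤ C ^ ((1:ℝ)/2) * (n:ℝ) ^ ((1:ℝ)/4) := by
    have h1 : A ≤ C * Real.sqrt n := hOv ▸ hov
    have h2 : Real.sqrt (C * Real.sqrt n) = C ^ ((1:ℝ)/2) * (n:ℝ) ^ ((1:ℝ)/4) := by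
      rw [Real.sqrt_eq_rpow, Real.sqrt_eq_rpow,
        Real.mul_rpow hC.le (Real.rpow_nonneg (Nat.cast_nonneg n) _),
        ← Real.rpow_mul (Nat.cast_nonneg n)]
      norm_num
    calc Real.sqrt A ≤ Real.sqrt (C * Real.sqrt n) := Real.sqrt_le_sqrt h1
      _ = _ := h2
  -- key log inequality
  have hkey : Real.log (Zn n β Ξ') + β * ∑ ε : Fin n → Bool, p ε * Δ ε
      ≤ Real.log (Zn n β Ξ) := by
    rw [hZQ, Real.log_mul hZ'pos.ne' hQpos.ne']
    linarith
  have hZ'log : Real.log EZ - Real.log (Real.sqrt ((n:ℝ) * Real.pi / 2))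
      ≤ Real.log (Zn n β Ξ') := by
    have hspos : 0 < Real.sqrt (2 / ((n:ℝ) * Real.pi)) := Real.sqrt_pos.mpr (by positivity)
    have h1 : Real.log (Real.sqrt (2 / ((n:ℝ) * Real.pi)) * EZ) ≤ Real.log (Zn n β Ξ') :=
      Real.log_le_log (mul_pos hspos hEZpos) hZ'
    rw [Real.log_mul hspos.ne' hEZpos.ne'] at h1
    have h2 : Real.sqrt (2 / ((n:ℝ) * Real.pi)) = (Real.sqrt ((n:ℝ) * Real.pi / 2))⁻¹ := by
      rw [show (2 / ((n:ℝ) * Real.pi)) = (((n:ℝ) * Real.pi / 2))⁻¹ from by rw [inv_div],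
        Real.sqrt_inv]
    rw [h2, Real.log_inv] at h1
    linarith
  -- numeric identity
  have e1 : (Real.pi * t / 2) ^ (-(1:ℝ)/4) * β = ((n:ℝ) * Real.pi) ^ (-(1:ℝ)/4) := by
    rw [hβ, show (-(1:ℝ)/4) = -((1:ℝ)/4) from by norm_num, Real.rpow_neg ht2.le]
    rw [inv_mul_eq_div, ← Real.div_rpow (by positivity) ht2.le]
    have harg : (t / (2 * (n:ℝ))) / (Real.pi * t / 2) = (((n:ℝ)) * Real.pi)⁻¹ := by
      field_simp
    rw [harg, Real.inv_rpow (by positivity), ← Real.rpow_neg (by positivity)]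
  have e2 : ((n:ℝ) * Real.pi) ^ (-(1:ℝ)/4) * ((n:ℝ) ^ ((1:ℝ)/4))
      = Real.pi ^ (-(1:ℝ)/4) := by
    rw [Real.mul_rpow hn0.le hπ.le]
    calc (n:ℝ) ^ (-(1:ℝ)/4) * Real.pi ^ (-(1:ℝ)/4) * (n:ℝ) ^ ((1:ℝ)/4)
        = ((n:ℝ) ^ (-(1:ℝ)/4) * (n:ℝ) ^ ((1:ℝ)/4)) * Real.pi ^ (-(1:ℝ)/4) := by ring
      _ = Real.pi ^ (-(1:ℝ)/4) := by
          rw [← Real.rpow_add hn0]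
          norm_num
  have hid : (Real.pi * t / 2) ^ (-(1:ℝ)/4) *
      (β * ((C ^ ((1:ℝ)/2) * (n:ℝ) ^ ((1:ℝ)/4)) * dEnv n Ξ Ξ'))
      = C ^ ((1:ℝ)/2) * Real.pi ^ (-(1:ℝ)/4) * dEnv n Ξ Ξ' := by
    calc (Real.pi * t / 2) ^ (-(1:ℝ)/4) *
          (β * ((C ^ ((1:ℝ)/2) * (n:ℝ) ^ ((1:ℝ)/4)) * dEnv n Ξ Ξ'))
        = C ^ ((1:ℝ)/2) *
            (((Real.pi * t / 2) ^ (-(1:ℝ)/4) * β) * (n:ℝ) ^ ((1:ℝ)/4)) *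
            dEnv n Ξ Ξ' := by ring
      _ = C ^ ((1:ℝ)/2) * Real.pi ^ (-(1:ℝ)/4) * dEnv n Ξ Ξ' := by rw [e1, e2]
  -- final assembly
  rw [Real.log_div hZpos.ne' hEZpos.ne']
  have m1 : β * (-(Real.sqrt A * dEnv n Ξ Ξ')) ≤ β * (∑ ε : Fin n → Bool, p ε * Δ ε) :=
    mul_le_mul_of_nonneg_left hCS3 hβ0
  rw [mul_neg] at m1
  have m2 : β * (Real.sqrt A * dEnv n Ξ Ξ')
      ≤ β * ((C ^ ((1:ℝ)/2) * (n:ℝ) ^ ((1:ℝ)/4)) * dEnv n Ξ Ξ') :=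
    mul_le_mul_of_nonneg_left (mul_le_mul_of_nonneg_right hAbound hd0) hβ0
  have hinner : -(β * ((C ^ ((1:ℝ)/2) * (n:ℝ) ^ ((1:ℝ)/4)) * dEnv n Ξ Ξ'))
      ≤ Real.log (Real.sqrt ((n:ℝ) * Real.pi / 2)) +
          (Real.log (Zn n β Ξ) - Real.log EZ) := by
    linarith
  have final1 := mul_le_mul_of_nonneg_left hinner hKpos.le
  rw [mul_neg, hid] at final1
  exact final1
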